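/- Let T ⊆ [m] × [n] be a nonempty tableau that is a state of the automaton M_•^{F₁,F₂} and suppose the final zone F is contained in ([m]×{0}) ∪ ({0}×[n]). Let Δ be the finest equivalence relation on the crosses of T generated by (i,j) Δ (i,j') and (i,j) Δ (i',j) for crosses in the same row or column. If T is accessible from the initial state ∅, then Δ has exactly one equivalence class on T. -/

import Mathlib

/-- The final zone `F = (F₁×[n]) • ([m]×F₂)` determined by a binary Boolean
function `b` and final sets `F₁`, `F₂`. -/
def finalZone {m n : ℕ} (b : Bool → Bool → Bool)
    (F₁ : Finset (Fin m)) (F₂ : Finset (Fin n)) : Set (Fin m × Fin n) :=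
  {p | b (decide (p.1 ∈ F₁)) (decide (p.2 ∈ F₂)) = true}

/-- The action of a pair of transformations on a tableau:
`T·(f,g) = {(f i, g j) | (i,j) ∈ T}`. -/
def act {m n : ℕ} (a : (Fin m → Fin m) × (Fin n → Fin n))
    (T : Set (Fin m × Fin n)) : Set (Fin m × Fin n) :=
  (fun p => (a.1 p.1, a.2 p.2)) '' T

open Classical in
/-- One transition of the automaton `M_•^{F₁,F₂}` on tableaux: on `∅` the
letter `(f,g)` produces `{(f 0, g 0)}`, on a nonempty tableau it produces
`T·(f,g)`; in both cases the cross `(0,0)` is added whenever the resulting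
tableau meets the final zone `F`. -/
noncomputable def mstep {m n : ℕ} [NeZero m] [NeZero n]
    (F : Set (Fin m × Fin n)) (a : (Fin m → Fin m) × (Fin n → Fin n))
    (T : Set (Fin m × Fin n)) : Set (Fin m × Fin n) :=
  let T' := if T = ∅ then ({(a.1 0, a.2 0)} : Set (Fin m × Fin n)) else act a T
  if (T' ∩ F).Nonempty then insert ((0 : Fin m), (0 : Fin n)) T' else T'

/-- The extended transition function `δ^w` of `M_•^{F₁,F₂}`. -/
noncomputable def mrun {m n : ℕ} [NeZero m] [NeZero n]
    (F : Set (Fin m × Fin n)) (w : List ((Fin m → Fin m) × (Fin n → Fin n)))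
    (T : Set (Fin m × Fin n)) : Set (Fin m × Fin n) :=
  w.foldl (fun T a => mstep F a T) T

/-- If the final zone is contained in `([m]×{0}) ∪ ({0}×[n])`, then any
nonempty accessible tableau `T` has a single class for the finest equivalence
relation `Δ` generated by relating crosses in a common row or column. -/
def rel' {m n : ℕ} (T : Set (Fin m × Fin n)) (p q : Fin m × Fin n) : Prop :=
  p ∈ T ∧ q ∈ T ∧ (p.1 = q.1 ∨ p.2 = q.2)

def Conn {m n : ℕ} (T : Set (Fin m × Fin n)) : Prop :=
  ∀ p ∈ T, ∀ q ∈ T, Relation.EqvGen (rel' T) p q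

lemma conn_mono {m n : ℕ} {T S : Set (Fin m × Fin n)} (h : T ⊆ S)
    {p q} (hpq : Relation.EqvGen (rel' T) p q) : Relation.EqvGen (rel' S) p q := by
  refine Relation.EqvGen.mono ?_ _ _ hpq
  rintro a b ⟨ha, hb, hab⟩
  exact ⟨h ha, h hb, hab⟩

lemma eqvgen_map {m n : ℕ} (a : (Fin m → Fin m) × (Fin n → Fin n))
    {T : Set (Fin m × Fin n)} {p q : Fin m × Fin n}
    (h : Relation.EqvGen (rel' T) p q) :
    Relation.EqvGen (rel' ((fun p : Fin m × Fin n => (a.1 p.1, a.2 p.2)) '' T))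
      ((fun p : Fin m × Fin n => (a.1 p.1, a.2 p.2)) p)
      ((fun p : Fin m × Fin n => (a.1 p.1, a.2 p.2)) q) := by
  induction h with
  | rel x y h =>
      exact Relation.EqvGen.rel _ _ ⟨⟨x, h.1, rfl⟩, ⟨y, h.2.1, rfl⟩,
        h.2.2.imp (fun e => by simp [e]) (fun e => by simp [e])⟩
  | refl x => exact Relation.EqvGen.refl _
  | symm x y _ ih => exact Relation.EqvGen.symm _ _ ih
  | trans x y z _ _ ih1 ih2 => exact Relation.EqvGen.trans _ _ _ ih1 ih2

lemma conn_act {m n : ℕ} (a : (Fin m → Fin m) × (Fin n → Fin n))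
    {T : Set (Fin m × Fin n)} (hT : Conn T) :
    Conn ((fun p : Fin m × Fin n => (a.1 p.1, a.2 p.2)) '' T) := by
  rintro p ⟨p', hp', rfl⟩ q ⟨q', hq', rfl⟩
  exact eqvgen_map a (hT p' hp' q' hq')

lemma conn_insert {m n : ℕ} [NeZero m] [NeZero n] {T : Set (Fin m × Fin n)}
    (hT : Conn T) {x : Fin m × Fin n} (hx : x ∈ T) (hx0 : x.1 = 0 ∨ x.2 = 0) :
    Conn (insert ((0 : Fin m), (0 : Fin n)) T) := by
  set S := insert ((0 : Fin m), (0 : Fin n)) T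
  have hsub : T ⊆ S := Set.subset_insert _ _
  have key : ∀ q ∈ T, Relation.EqvGen (rel' S) ((0 : Fin m), (0 : Fin n)) q := by
    intro q hq
    refine Relation.EqvGen.trans _ x _
      (Relation.EqvGen.rel _ _ ⟨Set.mem_insert _ _, hsub hx, ?_⟩)
      (conn_mono hsub (hT x hx q hq))
    exact hx0.imp (fun e => e.symm) (fun e => e.symm)
  rintro p (hp | hp) q (hq | hq)
  · subst hp; subst hq; exact Relation.EqvGen.refl _
  · subst hp; exact key q hq
  · subst hq; exact Relation.EqvGen.symm _ _ (key p hp)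
  · exact conn_mono hsub (hT p hp q hq)

lemma conn_singleton {m n : ℕ} (x : Fin m × Fin n) :
    Conn ({x} : Set (Fin m × Fin n)) := by
  rintro p hp q hq
  simp only [Set.mem_singleton_iff] at hp hq
  subst hp; subst hq; exact Relation.EqvGen.refl _

lemma conn_mstep {m n : ℕ} [NeZero m] [NeZero n] {F : Set (Fin m × Fin n)}
    (hF : ∀ p ∈ F, p.1 = 0 ∨ p.2 = 0)
    (a : (Fin m → Fin m) × (Fin n → Fin n)) {T : Set (Fin m × Fin n)}
    (hT : T = ∅ ∨ Conn T) : Conn (mstep F a T) := by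
  classical
  have hconn' : Conn (if T = ∅ then ({(a.1 0, a.2 0)} : Set (Fin m × Fin n))
      else act a T) := by
    split
    · exact conn_singleton _
    · next h0 => exact conn_act a (hT.resolve_left h0)
  show Conn (if ((if T = ∅ then ({(a.1 0, a.2 0)} : Set (Fin m × Fin n))
        else act a T) ∩ F).Nonempty
      then insert ((0 : Fin m), (0 : Fin n))
        (if T = ∅ then ({(a.1 0, a.2 0)} : Set (Fin m × Fin n)) else act a T)
      else (if T = ∅ then ({(a.1 0, a.2 0)} : Set (Fin m × Fin n)) else act a T))
  set T' := (if T = ∅ then ({(a.1 0, a.2 0)} : Set (Fin m × Fin n)) else act a T)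
    with hT'
  split
  · next hne =>
      obtain ⟨x, hxT, hxF⟩ := hne
      exact conn_insert hconn' hxT (hF x hxF)
  · exact hconn'

lemma conn_mrun {m n : ℕ} [NeZero m] [NeZero n] (F : Set (Fin m × Fin n))
    (hF : ∀ p ∈ F, p.1 = 0 ∨ p.2 = 0)
    (w : List ((Fin m → Fin m) × (Fin n → Fin n))) :
    mrun F w ∅ = ∅ ∨ Conn (mrun F w ∅) := by
  induction w using List.reverseRecOn with
  | nil => exact Or.inl rfl
  | append_singleton w a ih =>
      right
      have hrw : mrun F (w ++ [a]) ∅ = mstep F a (mrun F w ∅) := by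
        simp [mrun, List.foldl_append]
      rw [hrw]
      exact conn_mstep hF a ih

theorem accessible_delta_one_class (m n : ℕ) [NeZero m] [NeZero n]
    (b : Bool → Bool → Bool) (F₁ : Finset (Fin m)) (F₂ : Finset (Fin n))
    (hF : ∀ p ∈ finalZone b F₁ F₂, p.1 = 0 ∨ p.2 = 0)
    (T : Set (Fin m × Fin n)) (hT : T.Nonempty)
    (hacc : ∃ w, mrun (finalZone b F₁ F₂) w ∅ = T) :
    ∀ p ∈ T, ∀ q ∈ T,
      Relation.EqvGen
        (fun p q : Fin m × Fin n => p ∈ T ∧ q ∈ T ∧ (p.1 = q.1 ∨ p.2 = q.2)) p q := by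
  obtain ⟨w, rfl⟩ := hacc
  rcases conn_mrun _ hF w with h | h
  · rw [h] at hT; exact absurd hT (by simp)
  · exact h
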